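/- arXiv:1710.00638 — 2 statements merged into one kernel-verified Lean document; each statement's English description precedes it below -/
import Mathlib

section
/- Let R be a commutative ring, let k ≥ 2, let x_1, …, x_k be invertible elements of R with x̄_i := x_i^{−1}, let a = (a_1, a_2, …) be a sequence in R, and let m be any integer. Then h^{sp}_m((x_1,…,x_{k−1}),(x̄_1,…,x̄_{k−1})|a) − h^{sp}_m((x_2,…,x_k),(x̄_2,…,x̄_k)|a) = (x_1 + x̄_1 − x_k − x̄_k) · h^{sp}_{m−1}((x_1,…,x_k),(x̄_1,…,x̄_k)|a). -/
open Finset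

noncomputable def geom {R : Type*} [CommRing R] (x : R) : PowerSeries R :=
  PowerSeries.mk fun k => x ^ k

noncomputable def lin {R : Type*} [CommRing R] (a : R) : PowerSeries R :=
  1 + PowerSeries.C a * PowerSeries.X

noncomputable def facpow {R : Type*} [CommRing R] (x : R) (a : ℕ → R) (m : ℕ) : R :=
  ∏ j ∈ Finset.range m, (x + a (j + 1))

noncomputable def hgl {R : Type*} [CommRing R] {n : ℕ} (x : Fin n → R) (a : ℕ → R) (m : ℤ) : R :=
  if 0 ≤ m then
    PowerSeries.coeff m.toNat
      ((∏ i, geom (x i)) * ∏ j ∈ Finset.range (n + m.toNat - 1), lin (a (j + 1)))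
  else 0

noncomputable def hsp {R : Type*} [CommRing R] {n : ℕ} (x : Fin n → Rˣ) (a : ℕ → R) (m : ℤ) : R :=
  if 0 ≤ m then
    PowerSeries.coeff m.toNat
      ((∏ i, geom ((x i : R)) * geom (((x i)⁻¹ : Rˣ) : R)) *
        ∏ j ∈ Finset.range (n + m.toNat - 1), lin (a (j + 1)))
  else 0

noncomputable def hoo {R : Type*} [CommRing R] {n : ℕ} (x : Fin n → Rˣ) (a : ℕ → R) (m : ℤ) : R :=
  if 0 ≤ m then
    PowerSeries.coeff m.toNat
      ((1 + PowerSeries.X) * (∏ i, geom ((x i : R)) * geom (((x i)⁻¹ : Rˣ) : R)) *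
        ∏ j ∈ Finset.range (n + m.toNat - 1), lin (a (j + 1)))
  else 0

noncomputable def heo {R : Type*} [CommRing R] {n : ℕ} (x : Fin n → Rˣ) (a : ℕ → R) (m : ℤ) : R :=
  if 0 ≤ m then
    if h : n = 1 then
      (PowerSeries.coeff m.toNat
        ((geom ((x ⟨0, by omega⟩ : Rˣ) : R) + geom (((x ⟨0, by omega⟩)⁻¹ : Rˣ) : R)) *
          ∏ j ∈ Finset.range m.toNat, lin (a (j + 1))))
        - (if m = 0 then 1 else 0)
    else
      PowerSeries.coeff m.toNat
        ((1 - PowerSeries.X ^ 2) * (∏ i, geom ((x i : R)) * geom (((x i)⁻¹ : Rˣ) : R)) *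
          ∏ j ∈ Finset.range (n + m.toNat - 1), lin (a (j + 1)))
  else 0

noncomputable def heod {R : Type*} [CommRing R] {n : ℕ} (x : Fin n → Rˣ) (a : ℕ → R) (m : ℤ) : R :=
  if 0 < m then
    if h : 0 < n then
      PowerSeries.coeff m.toNat
        ((geom ((x ⟨0, h⟩ : Rˣ) : R) - geom (((x ⟨0, h⟩)⁻¹ : Rˣ) : R)) *
          (∏ i ∈ Finset.univ.filter (fun i : Fin n => i ≠ ⟨0, h⟩),
            geom ((x i : R)) * geom (((x i)⁻¹ : Rˣ) : R)) *
          ∏ j ∈ Finset.range (n + m.toNat - 1), lin (a (j + 1)))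
    else 0
  else 0

lemma geom_mul_inv {R : Type*} [CommRing R] (x : R) :
    geom x * (1 - PowerSeries.C x * PowerSeries.X) = 1 := by
  ext n
  cases n with
  | zero => simp [geom]
  | succ n =>
    rw [mul_sub, mul_one, mul_comm (PowerSeries.C x), ← mul_assoc]
    simp [PowerSeries.coeff_succ_mul_X, geom, pow_succ, mul_comm]

lemma pair_mul_inv {R : Type*} [CommRing R] (u : Rˣ) :
    (geom (u : R) * geom ((u⁻¹ : Rˣ) : R)) *
      ((1 - PowerSeries.C (u : R) * PowerSeries.X) *
        (1 - PowerSeries.C ((u⁻¹ : Rˣ) : R) * PowerSeries.X)) = 1 := by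
  have h1 := geom_mul_inv (R := R) (u : R)
  have h2 := geom_mul_inv (R := R) ((u⁻¹ : Rˣ) : R)
  calc _ = (geom (u:R) * (1 - PowerSeries.C (u:R) * PowerSeries.X)) *
        (geom ((u⁻¹:Rˣ):R) * (1 - PowerSeries.C ((u⁻¹:Rˣ):R) * PowerSeries.X)) := by ring
    _ = 1 := by rw [h1, h2, mul_one]

lemma key_identity {R : Type*} [CommRing R] (u v : Rˣ) :
    geom (u : R) * geom ((u⁻¹ : Rˣ) : R) - geom (v : R) * geom ((v⁻¹ : Rˣ) : R) =
      PowerSeries.C ((u : R) + ((u⁻¹ : Rˣ) : R) - (v : R) - ((v⁻¹ : Rˣ) : R)) *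
        PowerSeries.X *
        ((geom (u : R) * geom ((u⁻¹ : Rˣ) : R)) * (geom (v : R) * geom ((v⁻¹ : Rˣ) : R))) := by
  have hu := pair_mul_inv u
  have hv := pair_mul_inv v
  have hcu : PowerSeries.C (u : R) * PowerSeries.C ((u⁻¹ : Rˣ) : R) = 1 := by
    rw [← map_mul, ← Units.val_mul]; simp
  have hcv : PowerSeries.C (v : R) * PowerSeries.C ((v⁻¹ : Rˣ) : R) = 1 := by
    rw [← map_mul, ← Units.val_mul]; simp
  have hunit : IsUnit ((1 - PowerSeries.C (u : R) * PowerSeries.X) *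
      (1 - PowerSeries.C ((u⁻¹ : Rˣ) : R) * PowerSeries.X) *
      ((1 - PowerSeries.C (v : R) * PowerSeries.X) *
      (1 - PowerSeries.C ((v⁻¹ : Rˣ) : R) * PowerSeries.X))) := by
    refine IsUnit.of_mul_eq_one ((geom (u:R) * geom ((u⁻¹:Rˣ):R)) *
      (geom (v:R) * geom ((v⁻¹:Rˣ):R))) ?_
    calc _ = ((geom (u:R) * geom ((u⁻¹:Rˣ):R)) * ((1 - PowerSeries.C (u : R) * PowerSeries.X) *
          (1 - PowerSeries.C ((u⁻¹ : Rˣ) : R) * PowerSeries.X))) *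
        ((geom (v:R) * geom ((v⁻¹:Rˣ):R)) * ((1 - PowerSeries.C (v : R) * PowerSeries.X) *
          (1 - PowerSeries.C ((v⁻¹ : Rˣ) : R) * PowerSeries.X))) := by ring
      _ = 1 := by rw [hu, hv, mul_one]
  apply hunit.mul_left_cancel
  simp only [map_add, map_sub]
  linear_combination
    (((1 - PowerSeries.C (v : R) * PowerSeries.X) *
        (1 - PowerSeries.C ((v⁻¹ : Rˣ) : R) * PowerSeries.X)) -
      (PowerSeries.C (u:R) + PowerSeries.C ((u⁻¹:Rˣ):R) - PowerSeries.C (v:R)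
        - PowerSeries.C ((v⁻¹:Rˣ):R)) * PowerSeries.X *
        (geom (v:R) * geom ((v⁻¹:Rˣ):R)) *
        ((1 - PowerSeries.C (v : R) * PowerSeries.X) *
        (1 - PowerSeries.C ((v⁻¹ : Rˣ) : R) * PowerSeries.X))) * hu
    + (-(((1 - PowerSeries.C (u : R) * PowerSeries.X) *
        (1 - PowerSeries.C ((u⁻¹ : Rˣ) : R) * PowerSeries.X)))
      - (PowerSeries.C (u:R) + PowerSeries.C ((u⁻¹:Rˣ):R) - PowerSeries.C (v:R)
        - PowerSeries.C ((v⁻¹:Rˣ):R)) * PowerSeries.X) * hv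
    + (PowerSeries.X : PowerSeries R)^2 * hcv
    - (PowerSeries.X : PowerSeries R)^2 * hcu

theorem hsp_recurrence' {R : Type*} [CommRing R] (n : ℕ)
    (x : Fin (n + 2) → Rˣ) (a : ℕ → R) (m : ℤ) :
    hsp (fun i : Fin (n + 1) => x i.castSucc) a m
      - hsp (fun i : Fin (n + 1) => x i.succ) a m =
    ((x 0 : R) + (((x 0)⁻¹ : Rˣ) : R)
        - (x (Fin.last (n + 1)) : R) - (((x (Fin.last (n + 1)))⁻¹ : Rˣ) : R)) *
      hsp x a (m - 1) := by
  set F : Fin (n + 2) → PowerSeries R :=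
    fun i => geom ((x i : R)) * geom (((x i)⁻¹ : Rˣ) : R) with hF
  rcases lt_trichotomy m 0 with hm | hm | hm
  · have h1 : ¬ (0 ≤ m) := by omega
    have h2 : ¬ (0 ≤ m - 1) := by omega
    simp only [hsp, if_neg h1, if_neg h2, sub_zero, mul_zero]
  · subst hm
    have h2 : ¬ (0 ≤ (0:ℤ) - 1) := by norm_num
    simp only [hsp, if_pos le_rfl, if_neg h2, mul_zero, Int.toNat_zero]
    simp [geom, lin]
  · have h1 : (0:ℤ) ≤ m := by omega
    have h2 : (0:ℤ) ≤ m - 1 := by omega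
    obtain ⟨M, hM⟩ : ∃ M, m.toNat = M + 1 := ⟨m.toNat - 1, by omega⟩
    have hm1 : (m - 1).toNat = M := by omega
    simp only [hsp, if_pos h1, if_pos h2, hm1, hM]
    have hr1 : n + 1 + (M + 1) - 1 = n + M + 1 := by omega
    have hr2 : n + 2 + M - 1 = n + M + 1 := by omega
    rw [hr1, hr2]
    set L : PowerSeries R := ∏ j ∈ Finset.range (n + M + 1), lin (a (j + 1)) with hL
    have hP1 : (∏ i, F i) = (∏ i : Fin (n+1), F i.castSucc) * F (Fin.last (n+1)) :=
      Fin.prod_univ_castSucc F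
    have hP2 : (∏ i, F i) = F 0 * ∏ i : Fin (n+1), F i.succ :=
      Fin.prod_univ_succ F
    have key := key_identity (x 0) (x (Fin.last (n+1)))
    have hunit : IsUnit (F 0 * F (Fin.last (n+1))) := by
      refine (IsUnit.of_mul_eq_one _ (pair_mul_inv (x 0))).mul
        (IsUnit.of_mul_eq_one _ (pair_mul_inv (x (Fin.last (n+1)))))
    have hdiff : (∏ i : Fin (n+1), F i.castSucc) - (∏ i : Fin (n+1), F i.succ)
        = PowerSeries.C ((x 0 : R) + (((x 0)⁻¹ : Rˣ) : R)
            - (x (Fin.last (n + 1)) : R) - (((x (Fin.last (n + 1)))⁻¹ : Rˣ) : R)) *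
          PowerSeries.X * ∏ i, F i := by
      apply hunit.mul_left_cancel
      linear_combination (-(F 0)) * hP1 + F (Fin.last (n+1)) * hP2 + (∏ i, F i) * key
    rw [← map_sub, ← sub_mul, hdiff]
    rw [show (PowerSeries.C ((x 0 : R) + (((x 0)⁻¹ : Rˣ) : R)
            - (x (Fin.last (n + 1)) : R) - (((x (Fin.last (n + 1)))⁻¹ : Rˣ) : R)) *
          PowerSeries.X * ∏ i, F i) * L
        = PowerSeries.C ((x 0 : R) + (((x 0)⁻¹ : Rˣ) : R)
            - (x (Fin.last (n + 1)) : R) - (((x (Fin.last (n + 1)))⁻¹ : Rˣ) : R)) *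
          (((∏ i, F i) * L) * PowerSeries.X) by ring]
    rw [PowerSeries.coeff_C_mul, PowerSeries.coeff_succ_mul_X]

/-- recurrence relation for `h^sp`. -/
theorem hsp_recurrence {R : Type*} [CommRing R] (k : ℕ) (hk : 2 ≤ k)
    (x : Fin k → Rˣ) (a : ℕ → R) (m : ℤ) :
    hsp (fun i : Fin (k - 1) => x ⟨(i : ℕ), by have := i.isLt; omega⟩) a m
      - hsp (fun i : Fin (k - 1) => x ⟨(i : ℕ) + 1, by have := i.isLt; omega⟩) a m =
    ((x ⟨0, by omega⟩ : R) + (((x ⟨0, by omega⟩)⁻¹ : Rˣ) : R)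
        - (x ⟨k - 1, by omega⟩ : R) - (((x ⟨k - 1, by omega⟩)⁻¹ : Rˣ) : R)) *
      hsp x a (m - 1) := by
  obtain ⟨n, rfl⟩ : ∃ n, k = n + 2 := ⟨k - 2, by omega⟩
  exact hsp_recurrence' n x a m
end

section
/- (Flagged Jacobi–Trudi identity, odd orthogonal case.) Let n ≥ 1, let R be a commutative ring, let x_1, …, x_n be invertible elements of R with x̄_i := x_i^{−1}, let a = (a_1, a_2, …) be a sequence in R, and let λ = (λ_1 ≥ … ≥ λ_n ≥ 0) be a partition with at most n parts. Then det_{1≤i,j≤n} ( x_i·(x_i|a)^{λ_j+n−j} − (x̄_i|a)^{λ_j+n−j} ) = ∏_{i=1}^n (x_i − 1) · ∏_{1≤i<j≤n}(x_i + x̄_i − x_j − x̄_j) · det_{1≤i,j≤n} ( h^{oo}_{λ_j−j+i}(x^{(i)}, x̄^{(i)}|a) ), where x^{(i)} := (x_i, …, x_n) and x̄^{(i)} := (x̄_i, …, x̄_n). (This is the paper's identity with numerator and denominator rows each multiplied by x_i^{1/2}, so that no half-integer powers occur.) -/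
open Finset PowerSeries


open Finset

section Aux
variable {R : Type*} [CommRing R]


lemma geom_inv (x : R) : (1 - PowerSeries.C x * X) * geom x = 1 := by
  ext k
  rcases k with _ | k
  · simp [geom, PowerSeries.coeff_zero_eq_constantCoeff]
  · simp only [sub_mul, one_mul, map_sub, mul_assoc]
    rw [PowerSeries.coeff_C_mul, PowerSeries.coeff_succ_X_mul]
    simp [geom, PowerSeries.coeff_mk, PowerSeries.coeff_one, pow_succ, mul_comm]

lemma isUnit_one_sub (x : R) : IsUnit (1 - PowerSeries.C x * X) :=
  IsUnit.of_mul_eq_one _ (geom_inv x)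

lemma coeff_succ_geom_mul (x : R) (Q : PowerSeries R) (m : ℕ) :
    PowerSeries.coeff (m + 1) (geom x * Q) =
      x * PowerSeries.coeff m (geom x * Q) + PowerSeries.coeff (m + 1) Q := by
  have h : geom x * Q = Q + (PowerSeries.C x * X) * (geom x * Q) := by
    linear_combination Q * geom_inv x
  nth_rewrite 1 [h]
  rw [map_add, mul_assoc, PowerSeries.coeff_C_mul, PowerSeries.coeff_succ_X_mul]
  ring

/-- `Pa a k` is `∏_{j=1}^k (1 + a_j t)`. -/
noncomputable def Pa (a : ℕ → R) (k : ℕ) : PowerSeries R :=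
  ∏ j ∈ Finset.range k, lin (a (j + 1))

lemma coeff_Pa_eq_zero (a : ℕ → R) : ∀ k m : ℕ, k < m → PowerSeries.coeff m (Pa a k) = 0 := by
  intro k
  induction k with
  | zero =>
      intro m hm
      simp only [Pa, Finset.range_zero, Finset.prod_empty, PowerSeries.coeff_one]
      rw [if_neg (by omega)]
  | succ k ih =>
      intro m hm
      rcases m with _ | m
      · omega
      rw [Pa, Finset.prod_range_succ, ← Pa, lin, mul_add, mul_one, map_add, mul_comm,
        mul_assoc, PowerSeries.coeff_C_mul, PowerSeries.coeff_succ_X_mul]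
      rw [ih _ (by omega), ih _ (by omega), mul_zero, add_zero]

lemma coeff_geom_mul_Pa (x : R) (a : ℕ → R) (m : ℕ) :
    PowerSeries.coeff m (geom x * Pa a m) = facpow x a m := by
  induction m with
  | zero => simp [Pa, facpow, geom, PowerSeries.coeff_zero_eq_constantCoeff]
  | succ m ih =>
      rw [Pa, Finset.prod_range_succ, ← Pa, lin, mul_add, mul_one, mul_add, map_add]
      rw [coeff_succ_geom_mul, coeff_Pa_eq_zero a m (m+1) (by omega), add_zero]
      have : geom x * (Pa a m * (PowerSeries.C (a (m+1)) * X)) =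
          (PowerSeries.C (a (m+1))) * (X * (geom x * Pa a m)) := by ring
      rw [this, PowerSeries.coeff_C_mul, PowerSeries.coeff_succ_X_mul, ih]
      rw [show facpow x a (m+1) = (x + a (m+1)) * facpow x a m from Finset.prod_range_succ_comm _ m]
      rw [facpow]
      ring


noncomputable def qs (u : Rˣ) : PowerSeries R := geom (u : R) * geom ((u⁻¹ : Rˣ) : R)

lemma val_mul_inv (u : Rˣ) : ((u : R)) * ((u⁻¹ : Rˣ) : R) = 1 := by exact_mod_cast u.mul_inv

lemma C_mul_C_inv (u : Rˣ) :
    (PowerSeries.C (u:R)) * (PowerSeries.C ((u⁻¹:Rˣ):R)) = 1 := by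
  rw [← map_mul, val_mul_inv, map_one]

lemma idA (u : Rˣ) :
    PowerSeries.C (u : R) * geom (u : R) - geom ((u⁻¹ : Rˣ) : R) =
      PowerSeries.C ((u : R) - 1) * (1 + X) * qs u := by
  have h1 := geom_inv (R := R) (u : R)
  have h2 := geom_inv (R := R) ((u⁻¹ : Rˣ) : R)
  have h := C_mul_C_inv (R := R) u
  apply ((isUnit_one_sub ((u:R))).mul (isUnit_one_sub (((u⁻¹:Rˣ)):R))).mul_left_cancel
  set cu := PowerSeries.C (u:R)
  set cub := PowerSeries.C ((u⁻¹:Rˣ):R)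
  have hC : PowerSeries.C ((u : R) - 1) = cu - 1 := by rw [map_sub, map_one]
  have key : cu * (1 - cub * X) - (1 - cu * X) = (cu - 1) * (1 + X) := by
    linear_combination (-X) * h
  calc (1 - cu * X) * (1 - cub * X) * (cu * geom (u:R) - geom ((u⁻¹:Rˣ):R))
      = cu * (1 - cub * X) * ((1 - cu * X) * geom (u:R)) -
        (1 - cu * X) * ((1 - cub * X) * geom ((u⁻¹:Rˣ):R)) := by ring
    _ = cu * (1 - cub * X) - (1 - cu * X) := by rw [h1, h2]; ring
    _ = (cu - 1) * (1 + X) * (((1 - cu * X) * geom (u:R)) *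
          ((1 - cub * X) * geom ((u⁻¹:Rˣ):R))) := by rw [key, h1, h2]; ring
    _ = (1 - cu * X) * (1 - cub * X) * (PowerSeries.C ((u : R) - 1) * (1 + X) * qs u) := by
        rw [hC, qs]; ring

lemma idB (u v : Rˣ) :
    qs (R := R) u - qs v =
      PowerSeries.C (((u : R) + ((u⁻¹ : Rˣ) : R)) - ((v : R) + ((v⁻¹ : Rˣ) : R))) * X *
        (qs u * qs v) := by
  have h1 := geom_inv (R := R) (u : R)
  have h2 := geom_inv (R := R) ((u⁻¹ : Rˣ) : R)
  have h3 := geom_inv (R := R) (v : R)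
  have h4 := geom_inv (R := R) ((v⁻¹ : Rˣ) : R)
  have hu := C_mul_C_inv (R := R) u
  have hv := C_mul_C_inv (R := R) v
  apply (((isUnit_one_sub ((u:R))).mul (isUnit_one_sub (((u⁻¹:Rˣ)):R))).mul
    ((isUnit_one_sub ((v:R))).mul (isUnit_one_sub (((v⁻¹:Rˣ)):R)))).mul_left_cancel
  simp only [qs]
  set A := geom (R := R) (u : R)
  set B := geom (R := R) ((u⁻¹ : Rˣ) : R)
  set Cc := geom (R := R) (v : R)
  set D := geom (R := R) ((v⁻¹ : Rˣ) : R)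
  set cu := PowerSeries.C (u:R)
  set cub := PowerSeries.C ((u⁻¹:Rˣ):R)
  set cv := PowerSeries.C (v:R)
  set cvb := PowerSeries.C ((v⁻¹:Rˣ):R)
  have expand : PowerSeries.C (((u : R) + ((u⁻¹ : Rˣ) : R)) - ((v : R) + ((v⁻¹ : Rˣ) : R)))
      = cu + cub - cv - cvb := by rw [map_sub, map_add, map_add]; ring
  rw [expand]
  calc (1 - cu*X)*(1-cub*X)*((1-cv*X)*(1-cvb*X)) * (A*B - Cc*D)
      = ((1-cv*X)*(1-cvb*X)) * (((1-cu*X)*A) * ((1-cub*X)*B))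
        - ((1-cu*X)*(1-cub*X)) * (((1-cv*X)*Cc) * ((1-cvb*X)*D)) := by ring
    _ = ((1-cv*X)*(1-cvb*X)) - ((1-cu*X)*(1-cub*X)) := by rw [h1,h2,h3,h4]; ring
    _ = (cu + cub - cv - cvb) * X * 1 * 1 := by linear_combination X^2 * hv - X^2 * hu
    _ = (cu + cub - cv - cvb) * X * (((1-cu*X)*A) * ((1-cub*X)*B))
          * (((1-cv*X)*Cc) * ((1-cvb*X)*D)) := by rw [h1,h2,h3,h4]; ring
    _ = (1 - cu*X)*(1-cub*X)*((1-cv*X)*(1-cvb*X)) * ((cu + cub - cv - cvb) * X * (A*B*(Cc*D))) := by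
        ring

noncomputable def QQ (x' : ℕ → Rˣ) (j n : ℕ) : PowerSeries R := ∏ l ∈ Finset.Ico j n, qs (x' l)

noncomputable def yy (x' : ℕ → Rˣ) (l : ℕ) : R := ((x' l : R)) + (((x' l)⁻¹ : Rˣ) : R)

noncomputable def Hc (x' : ℕ → Rˣ) (a : ℕ → R) (n k : ℕ) (m : ℤ) : R :=
  if 0 ≤ m then
    PowerSeries.coeff m.toNat ((1 + X) * QQ x' k n * Pa a (n - 1 - k + m.toNat)) else 0

noncomputable def Gc (x' : ℕ → Rˣ) (a : ℕ → R) (n i j : ℕ) (m : ℤ) : R :=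
  if 0 ≤ m then
    PowerSeries.coeff m.toNat ((1 + X) * qs (x' i) * QQ x' j n * Pa a (n - j + m.toNat)) else 0

lemma QQ_succ (x' : ℕ → Rˣ) {j n : ℕ} (hj : j < n) :
    QQ (R := R) x' j n = qs (x' j) * QQ x' (j+1) n :=
  Finset.prod_eq_prod_Ico_succ_bot hj _

lemma rec1 (x' : ℕ → Rˣ) (a : ℕ → R) (n i j : ℕ) (hj : j < n) (m : ℤ) :
    Gc x' a n i (j+1) m =
      (yy x' i - yy x' j) * Gc x' a n i j (m - 1) + Hc x' a n j m := by
  have hser : ∀ W : PowerSeries R,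
      (1 + X) * qs (x' i) * QQ x' (j+1) n * W =
        PowerSeries.C (yy x' i - yy x' j) * X *
          ((1 + X) * qs (x' i) * (qs (x' j) * QQ x' (j+1) n) * W) +
        (1 + X) * qs (x' j) * QQ x' (j+1) n * W := by
    intro W
    have h := idB (R := R) (x' i) (x' j)
    rw [yy, yy]
    linear_combination ((1 + X) * QQ (R := R) x' (j+1) n * W) * h
  by_cases h0 : 0 ≤ m
  · by_cases h1 : m = 0
    · subst h1
      rw [Gc, Hc, Gc, if_pos le_rfl, if_pos le_rfl, if_neg (by omega), mul_zero, zero_add]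
      rw [QQ_succ x' hj]
      rw [hser (Pa a (n - (j+1) + (0:ℤ).toNat))]
      rw [map_add, mul_assoc (PowerSeries.C _) X _, PowerSeries.coeff_C_mul]
      rw [show ((0:ℤ).toNat = 0) from rfl]
      rw [PowerSeries.coeff_zero_eq_constantCoeff]
      simp only [map_mul, constantCoeff_X, mul_zero, zero_mul, zero_add]
      rw [show n - 1 - j + 0 = n - (j+1) + 0 from by omega]
      rw [← PowerSeries.coeff_zero_eq_constantCoeff]
      ring_nf
    · have hm1 : 0 ≤ m - 1 := by omega
      rw [Gc, Hc, Gc, if_pos h0, if_pos h0, if_pos hm1]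
      rw [show n - 1 - j + m.toNat = n - (j+1) + m.toNat from by omega]
      rw [show n - j + (m-1).toNat = n - (j+1) + m.toNat from by omega]
      set K := n - (j+1) + m.toNat with hK
      rw [QQ_succ x' hj]
      rw [hser (Pa a K)]
      rw [map_add, mul_assoc (PowerSeries.C _) X _, PowerSeries.coeff_C_mul]
      have hM : m.toNat = (m-1).toNat + 1 := by omega
      rw [hM, PowerSeries.coeff_succ_X_mul]
      ring_nf
  · rw [Gc, Hc, Gc, if_neg h0, if_neg h0, if_neg (by omega), mul_zero, zero_add]

lemma unroll_aux (x' : ℕ → Rˣ) (a : ℕ → R) (n i : ℕ) (m : ℤ) :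
    ∀ r, r ≤ n →
      Gc x' a n i n m =
        (∑ k ∈ Finset.Ico (n - r) n,
            (∏ l ∈ Finset.Ico (k+1) n, (yy x' i - yy x' l)) * Hc x' a n k (m + k + 1 - n)) +
          (∏ l ∈ Finset.Ico (n - r) n, (yy x' i - yy x' l)) * Gc x' a n i (n - r) (m - r) := by
  intro r
  induction r with
  | zero =>
      intro _
      simp
  | succ r ih =>
      intro hr
      have hj : n - (r+1) < n := by omega
      have hstep := rec1 x' a n i (n - (r+1)) hj (m - r)
      rw [show n - (r+1) + 1 = n - r from by omega] at hstep
      rw [ih (by omega), hstep]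
      rw [Finset.sum_eq_sum_Ico_succ_bot (show n - (r+1) < n from hj)
        (fun k => (∏ l ∈ Finset.Ico (k+1) n, (yy x' i - yy x' l)) * Hc x' a n k (m + k + 1 - n))]
      rw [Finset.prod_eq_prod_Ico_succ_bot (show n - (r+1) < n from hj)
        (fun l => (yy x' i - yy x' l))]
      rw [show n - (r+1) + 1 = n - r from by omega]
      rw [show (m + (n - (r+1) : ℕ) + 1 - n : ℤ) = m - r from by
        push_cast [Nat.cast_sub (show r+1 ≤ n from hr)]; ring]
      rw [show (m - (r:ℤ) - 1) = m - ((r+1 : ℕ) : ℤ) from by push_cast; ring]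
      ring

lemma unroll (x' : ℕ → Rˣ) (a : ℕ → R) (n i : ℕ) (hi : i < n) (m : ℤ) :
    Gc x' a n i n m =
      ∑ k ∈ Finset.range n,
        (∏ l ∈ Finset.Ico (k+1) n, (yy x' i - yy x' l)) * Hc x' a n k (m + k + 1 - n) := by
  have h := unroll_aux x' a n i m n le_rfl
  rw [Nat.sub_self] at h
  have hz : (∏ l ∈ Finset.Ico 0 n, (yy x' i - yy x' l)) = 0 :=
    Finset.prod_eq_zero (Finset.mem_Ico.mpr ⟨Nat.zero_le i, hi⟩) (sub_self _)
  rw [h, hz, zero_mul, add_zero, Finset.range_eq_Ico]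

lemma entry_eq (x' : ℕ → Rˣ) (a : ℕ → R) (n i : ℕ) (mu : ℕ) :
    ((x' i : R)) * facpow ((x' i : R)) a mu - facpow ((((x' i)⁻¹ : Rˣ) : R)) a mu =
      ((x' i : R) - 1) * Gc x' a n i n (mu : ℤ) := by
  have h := idA (R := R) (x' i)
  have h2 : (PowerSeries.C ((x' i : R)) * geom ((x' i : R)) -
        geom ((((x' i)⁻¹ : Rˣ)) : R)) * Pa a mu =
      PowerSeries.C (((x' i : R)) - 1) * ((1 + X) * qs (x' i) * Pa a mu) := by
    rw [h]; ring
  have h3 := congrArg (PowerSeries.coeff mu) h2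
  rw [sub_mul, map_sub, mul_assoc, PowerSeries.coeff_C_mul, PowerSeries.coeff_C_mul,
    coeff_geom_mul_Pa, coeff_geom_mul_Pa] at h3
  rw [Gc, if_pos (by positivity), Int.toNat_natCast]
  rw [show QQ (R := R) x' n n = 1 from by rw [QQ, Finset.Ico_self, Finset.prod_empty]]
  rw [show n - n + mu = mu from by omega]
  rw [h3]
  ring

lemma Hc_eq_hoo (x' : ℕ → Rˣ) (a : ℕ → R) {n k : ℕ} (hk : k < n) (m : ℤ) :
    Hc x' a n k m = hoo (fun t : Fin (n - k) => x' (k + (t : ℕ))) a m := by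
  rw [Hc, hoo]
  by_cases h : 0 ≤ m
  · rw [if_pos h, if_pos h]
    have hprod : (∏ t : Fin (n - k),
        (geom ((x' (k + (t:ℕ)) : R)) * geom ((((x' (k + (t:ℕ)))⁻¹ : Rˣ) : R)))) = QQ x' k n := by
      rw [QQ, Finset.prod_Ico_eq_prod_range]
      rw [← Fin.prod_univ_eq_prod_range (fun l => qs (x' (k + l))) (n - k)]
      rfl
    rw [← hprod, show (n - k) + m.toNat - 1 = n - 1 - k + m.toNat from by omega]
    rfl
  · rw [if_neg h, if_neg h]

lemma detB (n : ℕ) (Y : ℕ → R) :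
    (Matrix.of fun i k : Fin n => ∏ l ∈ Finset.Ico ((k:ℕ)+1) n, (Y (i:ℕ) - Y l)).det =
      ∏ i : Fin n, ∏ j ∈ Finset.Ioi i, (Y (i:ℕ) - Y (j:ℕ)) := by
  nontriviality R
  classical
  set p : Fin n → Polynomial R := fun c =>
    ∏ l ∈ Finset.Ico (((Fin.rev c) : ℕ) + 1) n, (Polynomial.X - Polynomial.C (Y l)) with hp
  have hdeg : ∀ c : Fin n, (p c).natDegree = (c : ℕ) := by
    intro c
    rw [hp]
    rw [Polynomial.natDegree_prod_of_monic _ _ (fun l _ => Polynomial.monic_X_sub_C _)]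
    simp only [Polynomial.natDegree_X_sub_C]
    rw [Finset.sum_const, Nat.card_Ico, smul_eq_mul, mul_one, Fin.val_rev]
    omega
  have hmonic : ∀ c : Fin n, (p c).Monic := fun c =>
    Polynomial.monic_prod_of_monic _ _ (fun l _ => Polynomial.monic_X_sub_C _)
  have h1 := Matrix.det_eval_matrixOfPolynomials_eq_det_vandermonde
    (fun i : Fin n => Y ((Fin.rev i : Fin n) : ℕ)) p hdeg hmonic
  have h2 : (Matrix.of fun i j : Fin n => (p j).eval (Y ((Fin.rev i : Fin n) : ℕ))) =
      (Matrix.of fun i k : Fin n =>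
        ∏ l ∈ Finset.Ico ((k:ℕ)+1) n, (Y (i:ℕ) - Y l)).submatrix Fin.revPerm Fin.revPerm := by
    ext i j
    simp only [Matrix.of_apply, Matrix.submatrix_apply, hp, Polynomial.eval_prod,
      Polynomial.eval_sub, Polynomial.eval_X, Polynomial.eval_C]
    rfl
  rw [h2, Matrix.det_submatrix_equiv_self] at h1
  rw [← h1, Matrix.det_vandermonde]
  rw [Finset.prod_sigma', Finset.prod_sigma']
  refine Finset.prod_nbij' (fun z => ⟨Fin.rev z.2, Fin.rev z.1⟩)
    (fun z => ⟨Fin.rev z.2, Fin.rev z.1⟩) ?_ ?_ ?_ ?_ ?_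
  · intro z hz
    simp only [Finset.mem_sigma, Finset.mem_univ, Finset.mem_Ioi, true_and] at hz ⊢
    exact Fin.rev_lt_rev.mpr hz
  · intro z hz
    simp only [Finset.mem_sigma, Finset.mem_univ, Finset.mem_Ioi, true_and] at hz ⊢
    exact Fin.rev_lt_rev.mpr hz
  · intro z _
    simp [Fin.rev_rev]
  · intro z _
    simp [Fin.rev_rev]
  · intro z _
    simp [Fin.rev_rev]

end Aux

/-- flagged Jacobi-Trudi identity, odd orthogonal case. -/
theorem flagged_jacobi_trudi_oo {R : Type*} [CommRing R] (n : ℕ) (hn : 1 ≤ n)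
    (x : Fin n → Rˣ) (a : ℕ → R) (lam : Fin n → ℕ) (hlam : Antitone lam) :
    Matrix.det (Matrix.of fun i j : Fin n =>
        (x i : R) * facpow ((x i : R)) a (lam j + (n - 1 - (j : ℕ)))
          - facpow ((((x i)⁻¹ : Rˣ) : R)) a (lam j + (n - 1 - (j : ℕ)))) =
      (∏ i : Fin n, ((x i : R) - 1)) *
      (∏ i : Fin n, ∏ j ∈ Finset.Ioi i,
          ((x i : R) + (((x i)⁻¹ : Rˣ) : R) - (x j : R) - (((x j)⁻¹ : Rˣ) : R))) *
        Matrix.det (Matrix.of fun i j : Fin n =>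
          hoo (fun k : Fin (n - (i : ℕ)) =>
              x ⟨(i : ℕ) + (k : ℕ), by have := i.isLt; have := k.isLt; omega⟩) a
            ((lam j : ℤ) - (j : ℕ) + (i : ℕ))) := by
  classical
  set x' : ℕ → Rˣ := fun l => if h : l < n then x ⟨l, h⟩ else 1 with hx'
  have hx1 : ∀ i : Fin n, x' (i : ℕ) = x i := by
    intro i; simp only [hx']; rw [dif_pos i.isLt]
  have key : (Matrix.of fun i j : Fin n =>
        (x i : R) * facpow ((x i : R)) a (lam j + (n - 1 - (j : ℕ)))
          - facpow ((((x i)⁻¹ : Rˣ) : R)) a (lam j + (n - 1 - (j : ℕ)))) =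
      Matrix.diagonal (fun i : Fin n => (x i : R) - 1) *
        ((Matrix.of fun i k : Fin n =>
            ∏ l ∈ Finset.Ico ((k:ℕ)+1) n, (yy x' (i:ℕ) - yy x' l)) *
          (Matrix.of fun i j : Fin n =>
            hoo (fun k : Fin (n - (i : ℕ)) =>
                x ⟨(i : ℕ) + (k : ℕ), by have := i.isLt; have := k.isLt; omega⟩) a
              ((lam j : ℤ) - (j : ℕ) + (i : ℕ)))) := by
    ext i j
    rw [Matrix.diagonal_mul, Matrix.mul_apply, Matrix.of_apply]
    have h1 := entry_eq (n := n) x' a (i : ℕ) (lam j + (n - 1 - (j:ℕ)))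
    rw [hx1 i] at h1
    rw [h1, unroll x' a n (i:ℕ) i.isLt]
    rw [← Fin.sum_univ_eq_sum_range (fun k =>
      (∏ l ∈ Finset.Ico (k+1) n, (yy x' (i:ℕ) - yy x' l)) *
        Hc x' a n k (((lam j + (n - 1 - (j:ℕ)) : ℕ) : ℤ) + k + 1 - n)) n]
    congr 1
    refine Finset.sum_congr rfl (fun k _ => ?_)
    rw [Hc_eq_hoo x' a k.isLt, Matrix.of_apply]
    have hfun : (fun t : Fin (n - (k:ℕ)) => x' ((k:ℕ) + (t:ℕ))) =
        (fun t : Fin (n - (k:ℕ)) =>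
          x ⟨(k:ℕ) + (t:ℕ), by have := k.isLt; have := t.isLt; omega⟩) := by
      funext t
      simp only [hx']
      rw [dif_pos (show (k:ℕ) + (t:ℕ) < n from by have := k.isLt; have := t.isLt; omega)]
    rw [hfun]
    simp only [Matrix.of_apply]
    have harg : (((lam j + (n - 1 - (j:ℕ)) : ℕ) : ℤ) + ((k:ℕ) : ℤ) + 1 - (n : ℤ)) =
        ((lam j : ℤ) - ((j:ℕ) : ℤ) + ((k:ℕ) : ℤ)) := by
      have hj := j.isLt
      omega
    rw [harg]
  rw [key, Matrix.det_mul, Matrix.det_mul, Matrix.det_diagonal, detB n (yy x')]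
  have hprod : (∏ i : Fin n, ∏ j ∈ Finset.Ioi i, (yy x' (i:ℕ) - yy x' (j:ℕ))) =
      ∏ i : Fin n, ∏ j ∈ Finset.Ioi i,
        ((x i : R) + (((x i)⁻¹ : Rˣ) : R) - (x j : R) - (((x j)⁻¹ : Rˣ) : R)) := by
    refine Finset.prod_congr rfl (fun i _ => Finset.prod_congr rfl (fun j _ => ?_))
    rw [yy, yy, hx1 i, hx1 j]
    ring
  rw [hprod]
  ring
end
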